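/- Fix an integer m ≥ 1 and a real sequence a = (a_k). Define the lower-triangular matrix V = (v_{nk}) by v_{nk} = Σ_{j=k}^{n} a_j B_{jk} for 1 ≤ k ≤ n, where B is the inverse triangle of H^(m). Then a belongs to the γ-dual of h_c(Δ^(m)) — i.e. the partial sums Σ_{k=1}^{n} a_k x_k are bounded in n for every x ∈ h_c(Δ^(m)) — if and only if V ∈ (c : ℓ∞), i.e. for every convergent sequence y the sequence ((Vy)_n)_n = (Σ_{k=1}^{n} v_{nk} y_k)_n is bounded. -/
import Mathlib


open Filter Finset Topology

/- Real sequences are modelled as functions `ℕ → ℝ`, where the Lean index `n : ℕ`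
corresponds to the paper's index `n + 1` (the paper indexes sequences by `k ≥ 1`).
Thus the paper's entry `h_{nk} = ∑_{i=k}^{n} (-1)^{i-k} C(m, i-k) / (n+i-1)`
(for `1 ≤ k ≤ n`) becomes, with 0-based indices,
`hMat m n k = ∑_{i ∈ Icc k n} (-1)^{i-k} C(m, i-k) / (n+i+1)`. -/

/-- The entries of the triangle matrix `H^(m) = H Δ^(m)` (0-based indexing). -/
noncomputable def hMat (m n k : ℕ) : ℝ :=
  ∑ i ∈ Finset.Icc k n, (-1 : ℝ) ^ (i - k) * (Nat.choose m (i - k) : ℝ) / ((n + i + 1 : ℕ) : ℝ)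

/-- The `H^(m)`-transform of a sequence: `(H^(m) x)_n = ∑_{k=1}^{n} h_{nk} x_k`. -/
noncomputable def hTrans (m : ℕ) (x : ℕ → ℝ) (n : ℕ) : ℝ :=
  ∑ k ∈ Finset.range (n + 1), hMat m n k * x k

/-- `h_0(Δ^(m))`: sequences whose `H^(m)`-transform tends to `0`. -/
def hZero (m : ℕ) : Set (ℕ → ℝ) := {x | Tendsto (hTrans m x) atTop (𝓝 0)}

/-- `h_c(Δ^(m))`: sequences whose `H^(m)`-transform converges. -/
def hConv (m : ℕ) : Set (ℕ → ℝ) := {x | ∃ L : ℝ, Tendsto (hTrans m x) atTop (𝓝 L)}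

/-- `h_∞(Δ^(m))`: sequences whose `H^(m)`-transform is bounded. -/
def hBdd (m : ℕ) : Set (ℕ → ℝ) := {x | ∃ M : ℝ, ∀ n, |hTrans m x n| ≤ M}

/-- The space `c₀` of null real sequences. -/
def c0Seq : Set (ℕ → ℝ) := {y | Tendsto y atTop (𝓝 0)}

/-- The space `c` of convergent real sequences. -/
def cSeq : Set (ℕ → ℝ) := {y | ∃ L : ℝ, Tendsto y atTop (𝓝 L)}

/-- The space `ℓ∞` of bounded real sequences. -/
def linfSeq : Set (ℕ → ℝ) := {y | ∃ M : ℝ, ∀ n, |y n| ≤ M}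

/-- The sup norm `‖y‖ = sup_n |y_n|` of a sequence. -/
noncomputable def supNorm (y : ℕ → ℝ) : ℝ := ⨆ n, |y n|

/-- The norm `‖x‖ = sup_n |(H^(m) x)_n|` on the Hilbert difference sequence spaces. -/
noncomputable def hNorm (m : ℕ) (x : ℕ → ℝ) : ℝ := supNorm (hTrans m x)


lemma swap_tri_sum (n : ℕ) (f : ℕ → ℕ → ℝ) (hf : ∀ k j, k < j → f k j = 0) :
    ∑ k ∈ Finset.range (n + 1), ∑ j ∈ Finset.range (k + 1), f k j
      = ∑ j ∈ Finset.range (n + 1), ∑ k ∈ Finset.Icc j n, f k j := by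
  have h1 : ∑ k ∈ Finset.range (n + 1), ∑ j ∈ Finset.range (k + 1), f k j
      = ∑ k ∈ Finset.range (n + 1), ∑ j ∈ Finset.range (n + 1), f k j := by
    refine Finset.sum_congr rfl fun k hk => ?_
    refine Finset.sum_subset ?_ ?_
    · intro j hj
      simp only [Finset.mem_range] at *
      omega
    · intro j _ hj
      simp only [Finset.mem_range, not_lt] at hj
      exact hf k j (by omega)
  rw [h1, Finset.sum_comm]
  refine Finset.sum_congr rfl fun j hj => ?_
  simp only [Finset.mem_range] at hj
  refine (Finset.sum_subset ?_ ?_).symm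
  · intro k hk
    simp only [Finset.mem_Icc, Finset.mem_range] at *
    omega
  · intro k hk hk'
    simp only [Finset.mem_Icc, Finset.mem_range] at hk hk'
    exact hf k j (by omega)

lemma hMat_zero (m n k : ℕ) (h : n < k) : hMat m n k = 0 := by
  unfold hMat
  rw [Finset.Icc_eq_empty (by omega), Finset.sum_empty]

theorem hilbert_diff_gammaDual_hc' (m : ℕ) (a : ℕ → ℝ)
    (B : ℕ → ℕ → ℝ)
    (hBtri : ∀ n k : ℕ, n < k → B n k = 0)
    (hBright : ∀ n k : ℕ, (∑ j ∈ Finset.Icc k n, hMat m n j * B j k) = if n = k then 1 else 0)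
    (hBleft : ∀ n k : ℕ, (∑ j ∈ Finset.Icc k n, B n j * hMat m j k) = if n = k then 1 else 0) :
    (∀ x ∈ hConv m, ∃ M : ℝ, ∀ n : ℕ,
        |∑ k ∈ Finset.range (n + 1), a k * x k| ≤ M) ↔
    (∀ y ∈ cSeq, ∃ M : ℝ, ∀ n : ℕ,
        |∑ k ∈ Finset.range (n + 1),
          (∑ j ∈ Finset.Icc k n, a j * B j k) * y k| ≤ M) := by
  -- Lemma C: if x k = ∑ B k j * y j then partial sums transform
  have lemC : ∀ (y : ℕ → ℝ) (n : ℕ),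
      ∑ k ∈ Finset.range (n + 1), a k * ∑ j ∈ Finset.range (k + 1), B k j * y j
        = ∑ k ∈ Finset.range (n + 1), (∑ j ∈ Finset.Icc k n, a j * B j k) * y k := by
    intro y n
    have := swap_tri_sum n (fun k j => a k * (B k j * y j))
      (fun k j h => by simp only [hBtri k j h]; ring)
    simp only [Finset.mul_sum] at this ⊢
    rw [this]
    rw [Finset.sum_congr rfl (fun j (_ : j ∈ Finset.range (n+1)) =>
      Finset.sum_congr rfl (fun k (_ : k ∈ Finset.Icc j n) =>
        (by ring : a k * (B k j * y j) = a k * B k j * y j)))]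
    exact Finset.sum_congr rfl fun k _ => (Finset.sum_mul _ _ _).symm
  -- Lemma B: hTrans of (B·y) is y
  have lemB : ∀ (y : ℕ → ℝ) (n : ℕ),
      hTrans m (fun k => ∑ j ∈ Finset.range (k + 1), B k j * y j) n = y n := by
    intro y n
    unfold hTrans
    have := swap_tri_sum n (fun k j => hMat m n k * (B k j * y j))
      (fun k j h => by simp only [hBtri k j h]; ring)
    simp only [Finset.mul_sum] at this ⊢
    rw [this]
    have : ∀ j ∈ Finset.range (n + 1),
        ∑ k ∈ Finset.Icc j n, hMat m n k * (B k j * y j)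
          = (if n = j then 1 else 0) * y j := by
      intro j _
      rw [← hBright n j, Finset.sum_mul]
      refine Finset.sum_congr rfl fun k _ => by ring
    rw [Finset.sum_congr rfl this]
    simp [Finset.sum_ite_eq']
  -- Lemma A: x k = ∑ B k j * (hTrans m x) j
  have lemA : ∀ (x : ℕ → ℝ) (k : ℕ),
      x k = ∑ j ∈ Finset.range (k + 1), B k j * hTrans m x j := by
    intro x k
    unfold hTrans
    have := swap_tri_sum k (fun j l => B k j * (hMat m j l * x l))
      (fun j l h => by simp only [hMat_zero m j l h]; ring)
    simp only [Finset.mul_sum] at this ⊢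
    rw [this]
    have h2 : ∀ l ∈ Finset.range (k + 1),
        ∑ j ∈ Finset.Icc l k, B k j * (hMat m j l * x l)
          = (if k = l then 1 else 0) * x l := by
      intro l _
      rw [← hBleft k l, Finset.sum_mul]
      refine Finset.sum_congr rfl fun j _ => by ring
    rw [Finset.sum_congr rfl h2]
    simp [Finset.sum_ite_eq']
  constructor
  · intro H y hy
    obtain ⟨L, hL⟩ := hy
    set x : ℕ → ℝ := fun k => ∑ j ∈ Finset.range (k + 1), B k j * y j with hx
    have hxc : x ∈ hConv m := ⟨L, by
      have : hTrans m x = y := funext fun n => lemB y n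
      rw [this]; exact hL⟩
    obtain ⟨M, hM⟩ := H x hxc
    exact ⟨M, fun n => by rw [← lemC y n]; exact hM n⟩
  · intro H x hx
    set y : ℕ → ℝ := hTrans m x with hy
    have hyc : y ∈ cSeq := hx
    obtain ⟨M, hM⟩ := H y hyc
    refine ⟨M, fun n => ?_⟩
    have : ∑ k ∈ Finset.range (n + 1), a k * x k
        = ∑ k ∈ Finset.range (n + 1), (∑ j ∈ Finset.Icc k n, a j * B j k) * y k := by
      rw [← lemC y n]
      exact Finset.sum_congr rfl fun k _ => by rw [← lemA x k]
    rw [this]; exact hM n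

/-- `a` is in the γ-dual of `hConv m` iff the matrix `V`, `v_{nk} = ∑_{j=k}^n a_j B_{jk}`,
maps `cSeq` into the bounded sequences. -/
theorem hilbert_diff_gammaDual_hc (m : ℕ) (hm : 1 ≤ m) (a : ℕ → ℝ)
    (B : ℕ → ℕ → ℝ)
    (hBtri : ∀ n k : ℕ, n < k → B n k = 0)
    (hBright : ∀ n k : ℕ, (∑ j ∈ Finset.Icc k n, hMat m n j * B j k) = if n = k then 1 else 0)
    (hBleft : ∀ n k : ℕ, (∑ j ∈ Finset.Icc k n, B n j * hMat m j k) = if n = k then 1 else 0) :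
    (∀ x ∈ hConv m, ∃ M : ℝ, ∀ n : ℕ,
        |∑ k ∈ Finset.range (n + 1), a k * x k| ≤ M) ↔
    (∀ y ∈ cSeq, ∃ M : ℝ, ∀ n : ℕ,
        |∑ k ∈ Finset.range (n + 1),
          (∑ j ∈ Finset.Icc k n, a j * B j k) * y k| ≤ M) := by
  exact hilbert_diff_gammaDual_hc' m a B hBtri hBright hBleft
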